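/- Let $F : X \rightrightarrows Y$ be a closed convex set-valued mapping between Banach spaces, $A \subseteq X$ closed convex, $\bar y \in Y$, $S := F^{-1}(\bar y) \cap A$, $\bar x \in S$, and $x \in S$. Suppose there exist $\eta > 0$ such that for all $\eta_1, \eta_2 \geq 0$ with $\eta_1 + \eta_2 < \eta$: $DF^{-1}(\bar y, x)(\eta_1 B_Y) \cap (T(A,x) + \eta_2 B_X) \subseteq T(S,x) + B_X$. Then for every $\tau > 1/\eta$ and every $h \in X$: $d(h, T(S,x)) \leq \tau\,(d(0, DF(x,\bar y)(h)) + d(h, T(A,x)))$. -/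

import Mathlib

open Set Metric Filter Topology Pointwise

noncomputable section

/-- Contingent cone of a convex set: closure of ⋃_{t>0} (A - a)/t. -/
def contCone {X : Type*} [NormedAddCommGroup X] [NormedSpace ℝ X] (A : Set X) (a : X) : Set X :=
  closure {v : X | ∃ t : ℝ, 0 < t ∧ a + t • v ∈ A}

lemma contCone_smul_mem {X : Type*} [NormedAddCommGroup X] [NormedSpace ℝ X]
    {A : Set X} {a v : X} {c : ℝ} (hc : 0 < c) (hv : v ∈ contCone A a) :
    c • v ∈ contCone A a := by
  refine map_mem_closure (continuous_const_smul c) hv ?_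
  rintro y ⟨t, ht, hA⟩
  exact ⟨t / c, div_pos ht hc, by rwa [smul_smul, div_mul_cancel₀ _ hc.ne']⟩

theorem stmt12 {X Y : Type*} [NormedAddCommGroup X] [NormedSpace ℝ X] [CompleteSpace X]
    [NormedAddCommGroup Y] [NormedSpace ℝ Y] [CompleteSpace Y]
    (F : X → Set Y) (hFcl : IsClosed {p : X × Y | p.2 ∈ F p.1})
    (hFcv : Convex ℝ {p : X × Y | p.2 ∈ F p.1})
    (A : Set X) (hAcl : IsClosed A) (hAcv : Convex ℝ A)
    (ybar : Y) (xbar : X) (hxbar : xbar ∈ {x : X | ybar ∈ F x} ∩ A)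
    (x : X) (hx : x ∈ {x : X | ybar ∈ F x} ∩ A)
    (η : ℝ) (hη : 0 < η)
    (hincl : ∀ η₁ η₂ : ℝ, 0 ≤ η₁ → 0 ≤ η₂ → η₁ + η₂ < η →
      {u : X | ∃ v ∈ closedBall (0 : Y) η₁,
          (u, v) ∈ contCone {p : X × Y | p.2 ∈ F p.1} (x, ybar)} ∩
        (contCone A x + closedBall (0 : X) η₂) ⊆
      contCone ({x : X | ybar ∈ F x} ∩ A) x + closedBall (0 : X) 1) :
    ∀ τ : ℝ, 1 / η < τ → ∀ h : X,
      EMetric.infEdist h (contCone ({x : X | ybar ∈ F x} ∩ A) x) ≤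
        ENNReal.ofReal τ *
          (EMetric.infEdist (0 : Y)
              {v : Y | (h, v) ∈ contCone {p : X × Y | p.2 ∈ F p.1} (x, ybar)} +
            EMetric.infEdist h (contCone A x)) := by
  intro τ hτ h
  have hτ0 : 0 < τ := lt_trans (by positivity) hτ
  set Tg := contCone {p : X × Y | p.2 ∈ F p.1} (x, ybar) with hTgdef
  set TA := contCone A x with hTAdef
  set C := contCone ({x : X | ybar ∈ F x} ∩ A) x with hCdef
  set a := EMetric.infEdist (0 : Y) {v : Y | (h, v) ∈ Tg} with ha
  set b := EMetric.infEdist h TA with hb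
  by_cases hatop : a = ⊤
  · rw [hatop, top_add, ENNReal.mul_top
      (by simpa using (ENNReal.ofReal_pos.mpr hτ0).ne')]
    exact le_top
  by_cases hbtop : b = ⊤
  · rw [hbtop, add_top, ENNReal.mul_top
      (by simpa using (ENNReal.ofReal_pos.mpr hτ0).ne')]
    exact le_top
  -- main case: both finite
  refine ENNReal.le_of_forall_pos_le_add (fun ε hε _ => ?_)
  set α := a.toReal with hα
  set β := b.toReal with hβ
  have hα0 : 0 ≤ α := ENNReal.toReal_nonneg
  have hβ0 : 0 ≤ β := ENNReal.toReal_nonneg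
  set ε' : ℝ := (ε : ℝ) / (2 * τ) with hε'
  have hε'0 : 0 < ε' := div_pos (by exact_mod_cast hε) (by positivity)
  -- pick v close to realizing a
  have hav : a < ENNReal.ofReal (α + ε') := by
    rw [ENNReal.ofReal_add hα0 hε'0.le, hα, ENNReal.ofReal_toReal hatop]
    exact ENNReal.lt_add_right hatop (ENNReal.ofReal_pos.mpr hε'0).ne'
  rw [ha, EMetric.infEdist, Metric.infEDist_lt_iff] at hav
  obtain ⟨v, hvTg, hvd⟩ := hav
  rw [edist_lt_ofReal, dist_comm, dist_zero_right] at hvd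
  -- pick w close to realizing b
  have hbw : b < ENNReal.ofReal (β + ε') := by
    rw [ENNReal.ofReal_add hβ0 hε'0.le, hβ, ENNReal.ofReal_toReal hbtop]
    exact ENNReal.lt_add_right hbtop (ENNReal.ofReal_pos.mpr hε'0).ne'
  rw [hb, EMetric.infEdist, Metric.infEDist_lt_iff] at hbw
  obtain ⟨w, hwTA, hwd⟩ := hbw
  rw [edist_lt_ofReal] at hwd
  set s : ℝ := τ * (α + β + 2 * ε') with hs
  have hq0 : 0 < α + β + 2 * ε' := by linarith
  have hs0 : 0 < s := by positivity
  have hsum : ‖v‖ / s + dist h w / s < η := by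
    have h1τ : 1 / τ < η := by
      rw [div_lt_iff₀ hτ0]
      rw [div_lt_iff₀ hη] at hτ
      nlinarith
    have heq : (α + β + 2 * ε') / s = 1 / τ := by
      rw [hs]
      field_simp
    calc ‖v‖ / s + dist h w / s = (‖v‖ + dist h w) / s := by ring
      _ < (α + β + 2 * ε') / s := by
          apply div_lt_div_of_pos_right ?_ hs0
          linarith
      _ = 1 / τ := heq
      _ < η := h1τ
  have hmem : s⁻¹ • h ∈ C + closedBall (0 : X) 1 := by
    apply hincl (‖v‖ / s) (dist h w / s) (by positivity) (by positivity) hsum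
    constructor
    · refine ⟨s⁻¹ • v, ?_, ?_⟩
      · rw [mem_closedBall, dist_zero_right, norm_smul, norm_inv, Real.norm_eq_abs,
          abs_of_pos hs0, inv_mul_eq_div]
      · have := contCone_smul_mem (inv_pos.mpr hs0) hvTg
        simpa using this
    · rw [Set.mem_add]
      refine ⟨s⁻¹ • w, contCone_smul_mem (inv_pos.mpr hs0) hwTA, s⁻¹ • (h - w), ?_, ?_⟩
      · rw [mem_closedBall, dist_zero_right, norm_smul, norm_inv, Real.norm_eq_abs,
          abs_of_pos hs0, inv_mul_eq_div, ← dist_eq_norm]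
      · rw [← smul_add]
        congr 1
        abel
  obtain ⟨u, huC, bb, hbb, hsumeq⟩ := Set.mem_add.mp hmem
  rw [mem_closedBall, dist_zero_right] at hbb
  have hkey : EMetric.infEdist h C ≤ ENNReal.ofReal s := by
    calc EMetric.infEdist h C ≤ edist h (s • u) :=
          EMetric.infEdist_le_edist_of_mem (contCone_smul_mem hs0 huC)
      _ = ENNReal.ofReal (dist h (s • u)) := edist_dist _ _
      _ ≤ ENNReal.ofReal s := by
          apply ENNReal.ofReal_le_ofReal
          have hh : h = s • u + s • bb := by
            have := congrArg (fun z => s • z) hsumeq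
            simpa [smul_add, smul_inv_smul₀ hs0.ne'] using this.symm
          rw [dist_eq_norm, hh]
          have : s • u + s • bb - s • u = s • bb := by abel
          rw [this, norm_smul, Real.norm_eq_abs, abs_of_pos hs0]
          nlinarith [norm_nonneg bb]
  refine hkey.trans ?_
  have hsplit : ENNReal.ofReal s = ENNReal.ofReal τ * (a + b) + ε := by
    have hseq : s = τ * (α + β) + (ε : ℝ) := by
      rw [hs, hε']
      field_simp
    rw [hseq, ENNReal.ofReal_add (by positivity) ε.coe_nonneg,
      ENNReal.ofReal_coe_nnreal, ENNReal.ofReal_mul hτ0.le,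
      ENNReal.ofReal_add hα0 hβ0, hα, hβ, ENNReal.ofReal_toReal hatop,
      ENNReal.ofReal_toReal hbtop]
  rw [hsplit]
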